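/- Let n ≥ 3 and let d be an odd square-free integer. Then the prime ideal of Q(ζ_{2^n}) lying above 2 (which is unique since 2 is totally ramified in Q(ζ_{2^n})/Q) is unramified in Q(ζ_{2^n}, √d). -/

import Mathlib

open NumberField IntermediateField Polynomial nonZeroDivisors

/-- For n ≥ 3 and d an odd square-free integer, any prime ideal of Q(ζ_{2^n})
lying above 2 is unramified in Q(ζ_{2^n}, √d). -/
theorem stmt_5 (n : ℕ) (hn : 3 ≤ n) (d : ℤ) (hodd : Odd d) (hsf : Squarefree d)
    (K : Type*) [Field K] [NumberField K]
    (ζ : K) (hζ : IsPrimitiveRoot ζ (2 ^ n)) (hK : IntermediateField.adjoin ℚ {ζ} = ⊤)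
    (L : Type*) [Field L] [NumberField L] [Algebra K L]
    (s : L) (hs : s ^ 2 = (d : L)) (hL : IntermediateField.adjoin K {s} = ⊤)
    (𝔭 : Ideal (𝓞 K)) (h𝔭 : 𝔭.IsPrime) (h2 : (2 : 𝓞 K) ∈ 𝔭) :
    ¬ ∃ P : Ideal (𝓞 L), P.IsPrime ∧
        Ideal.comap (RingOfIntegers.mapRingHom (algebraMap K L)) P = 𝔭 ∧
        1 < sSup {n : ℕ | Ideal.map (RingOfIntegers.mapRingHom (algebraMap K L)) 𝔭 ≤ P ^ n} := by
  rintro ⟨P, hP, hcomap, hlt⟩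
  -- `2 ∈ P`
  have h2L : (2 : 𝓞 L) ∈ P := by
    rw [← hcomap, Ideal.mem_comap, map_ofNat] at h2
    exact h2
  -- Find `u : K`, `e m : ℤ` with `u ≠ 0`, `u ^ 2 * d = e`, `e = 1 - 4 * m`.
  obtain ⟨u, e, m, hu0, hue, hem⟩ : ∃ (u : K) (e m : ℤ), u ≠ 0 ∧
      u ^ 2 * (d : K) = (e : K) ∧ e = 1 - 4 * m := by
    obtain ⟨k, hk⟩ := hodd
    rcases Int.even_or_odd k with ⟨j, hj⟩ | ⟨j, hj⟩
    · -- d = 4j + 1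
      exact ⟨1, d, -j, one_ne_zero, by push_cast; ring, by omega⟩
    · -- d = 4j + 3, use u = ζ^(2^(n-2)) with u^2 = -1
      have hlt2 : 2 ^ (n - 1) < 2 ^ n := Nat.pow_lt_pow_right one_lt_two (by omega)
      have hpos : 0 < 2 ^ (n - 1) := Nat.pow_pos two_pos
      have hsq : (ζ ^ 2 ^ (n - 1)) ^ 2 = 1 := by
        rw [← pow_mul]
        have h1 : 2 ^ (n - 1) * 2 = 2 ^ n := by
          rw [← pow_succ]
          congr 1
          omega
        rw [h1, hζ.pow_eq_one]
      have hne1 : ζ ^ 2 ^ (n - 1) ≠ 1 := hζ.pow_ne_one_of_pos_of_lt hpos.ne' hlt2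
      have hneg : ζ ^ 2 ^ (n - 1) = -1 := by
        have hfac : (ζ ^ 2 ^ (n - 1) - 1) * (ζ ^ 2 ^ (n - 1) + 1) = 0 := by
          linear_combination hsq
        rcases mul_eq_zero.mp hfac with h | h
        · exact absurd (by linear_combination h) hne1
        · linear_combination h
      have hζne : ζ ≠ 0 := hζ.ne_zero (by positivity)
      refine ⟨ζ ^ 2 ^ (n - 2), -d, (j + 1), pow_ne_zero _ hζne, ?_, by omega⟩
      have h22 : (ζ ^ 2 ^ (n - 2)) ^ 2 = ζ ^ 2 ^ (n - 1) := by
        rw [← pow_mul]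
        congr 1
        have h3 : n - 1 = (n - 2) + 1 := by omega
        rw [h3, pow_succ]
      rw [h22, hneg]
      push_cast
      ring
  have he_odd : ∃ k : ℤ, e = 2 * k + 1 := ⟨-2 * m, by omega⟩
  -- the element θ = (1 + u • s) / 2
  set t : L := algebraMap K L u * s with ht_def
  have ht2 : t ^ 2 = (e : L) := by
    rw [ht_def, mul_pow, hs, ← map_pow, ← map_intCast (algebraMap K L) d, ← map_mul, hue,
      map_intCast]
  set θ : L := (1 + t) / 2 with hθ_def
  have h2ne : (2 : L) ≠ 0 := two_ne_zero
  have hcaste : (e : L) = 1 - 4 * (m : L) := by exact_mod_cast congrArg (Int.cast : ℤ → L) hem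
  have hθeq : θ ^ 2 - θ + (m : L) = 0 := by
    have h4 : θ ^ 2 - θ + (m : L) = (t ^ 2 - 1 + 4 * (m : L)) / 4 := by
      rw [hθ_def]; ring
    rw [h4, ht2, hcaste]
    ring
  have hθint : IsIntegral ℤ θ := by
    refine ⟨X ^ 2 - X + C m, ?_, ?_⟩
    · monicity!
    · simp only [eval₂_add, eval₂_sub, eval₂_pow, eval₂_X, eval₂_C]
      have hmc : algebraMap ℤ L m = (m : L) := by simp
      rw [hmc]
      exact hθeq
  set θ' : 𝓞 L := ⟨θ, hθint⟩ with hθ'_def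
  have hcoeθ : algebraMap (𝓞 L) L θ' = θ := rfl
  have hinj : Function.Injective (algebraMap (𝓞 L) L) := FaithfulSMul.algebraMap_injective _ _
  -- adjoin condition
  have humap : algebraMap K L u ≠ 0 := fun h => hu0 ((_root_.map_eq_zero (algebraMap K L)).mp h)
  have hadj : Algebra.adjoin K {algebraMap (𝓞 L) L θ'} = ⊤ := by
    rw [hcoeθ]
    have hts : 2 * θ - 1 = t := by
      rw [hθ_def]; field_simp; ring
    have hsmem : s ∈ Algebra.adjoin K {θ} := by
      have h1 : θ ∈ Algebra.adjoin K {θ} := Algebra.subset_adjoin rfl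
      have h2' : algebraMap K L u⁻¹ * (2 * θ - 1) = s := by
        rw [hts, ht_def, map_inv₀, ← mul_assoc, inv_mul_cancel₀ humap, one_mul]
      rw [← h2', two_mul]
      refine Subalgebra.mul_mem _ (Subalgebra.algebraMap_mem _ _) ?_
      exact Subalgebra.sub_mem _ (Subalgebra.add_mem _ h1 h1) (Subalgebra.one_mem _)
    have htop : Algebra.adjoin K {s} = ⊤ := by
      have hsint : IsIntegral K s := (IsIntegral.of_finite K s)
      have := IntermediateField.adjoin_simple_toSubalgebra_of_isAlgebraic hsint.isAlgebraic
      rw [hL, IntermediateField.top_toSubalgebra] at this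
      exact this.symm
    rw [eq_top_iff, ← htop]
    exact Algebra.adjoin_le (by simpa using hsmem)
  -- P divides the different ideal
  have h𝔭ne : 𝔭 ≠ ⊥ := by
    intro hb
    rw [hb] at h2
    exact two_ne_zero (by simpa using h2)
  haveI : 𝔭.IsMaximal := Ideal.IsPrime.isMaximal h𝔭 h𝔭ne
  letI := FractionRing.liftAlgebra (𝓞 K) (FractionRing (𝓞 L))
  haveI : IsLocalization (Algebra.algebraMapSubmonoid (𝓞 L) (𝓞 K)⁰) (FractionRing (𝓞 L)) :=
    IsIntegralClosure.isLocalization _ (FractionRing (𝓞 K)) _ _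
  haveI : FiniteDimensional (FractionRing (𝓞 K)) (FractionRing (𝓞 L)) :=
    Module.Finite.of_isLocalization (𝓞 K) (𝓞 L) (𝓞 K)⁰
  have hPdvd : P ∣ differentIdeal (𝓞 K) (𝓞 L) := by
    have hle : Ideal.map (algebraMap (𝓞 K) (𝓞 L)) 𝔭 ≤ P ^ 2 := by
      have hbdd : BddAbove {n : ℕ | Ideal.map (RingOfIntegers.mapRingHom (algebraMap K L)) 𝔭 ≤ P ^ n} := by
        by_contra hb
        rw [csSup_of_not_bddAbove hb, csSup_empty] at hlt
        exact absurd hlt (by simp)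
      have hmem := Nat.sSup_mem ⟨0, by simp⟩ hbdd
      exact le_trans hmem (Ideal.pow_le_pow_right hlt)
    have := pow_sub_one_dvd_differentIdeal (𝓞 K) P 2 h𝔭ne (Ideal.dvd_iff_le.mpr hle)
    simpa using this
  -- the derivative of the minimal polynomial of θ' is in P
  have hderiv : aeval θ' (derivative (minpoly (𝓞 K) θ')) ∈ P := by
    have hsp : Ideal.span {aeval θ' (derivative (minpoly (𝓞 K) θ'))} ≤ P := by
      rw [← conductor_mul_differentIdeal (𝓞 K) K L θ' hadj]
      exact le_trans Ideal.mul_le_right (Ideal.le_of_dvd hPdvd)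
    exact hsp (Ideal.mem_span_singleton_self _)
  -- minpoly divides g = X^2 - X + C m
  have hθ'int : IsIntegral (𝓞 K) θ' := IsIntegralClosure.isIntegral _ L θ'
  set g : (𝓞 K)[X] := X ^ 2 - X + C (m : 𝓞 K) with hg_def
  have hgeval : aeval θ' g = 0 := by
    apply hinj
    rw [map_zero, ← Polynomial.aeval_algebraMap_apply, hcoeθ]
    simp only [hg_def, map_add, map_sub, map_pow, aeval_X, aeval_C]
    have : algebraMap (𝓞 K) L ((m : 𝓞 K)) = (m : L) := by
      simp [map_intCast]
    rw [this]
    exact hθeq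
  obtain ⟨c, hc⟩ := minpoly.isIntegrallyClosed_dvd hθ'int hgeval
  -- evaluate derivative of g at θ'
  have hg' : aeval θ' (derivative g) ∈ P := by
    rw [hc, derivative_mul]
    rw [map_add, map_mul, map_mul, minpoly.aeval, zero_mul, add_zero]
    exact Ideal.mul_mem_right _ _ hderiv
  have hgval : aeval θ' (derivative g) = 2 * θ' - 1 := by
    have hdg : derivative g = C 2 * X - 1 := by
      rw [hg_def]
      simp
      rw [one_add_one_eq_two]; exact (map_ofNat C 2).symm
    rw [hdg]
    simp only [map_sub, map_mul, aeval_C, aeval_X, map_one, map_ofNat]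
  rw [hgval] at hg'
  -- (2θ'-1)^2 = e
  have hτ2 : (2 * θ' - 1) ^ 2 = (e : 𝓞 L) := by
    apply hinj
    rw [map_pow, map_sub, map_mul, map_one, map_ofNat, hcoeθ]
    have h2' : (2 : L) * θ - 1 = t := by
      rw [hθ_def]; field_simp; ring
    rw [h2', ht2]
    simp
  have heP : ((e : ℤ) : 𝓞 L) ∈ P := by
    rw [← hτ2]
    exact Ideal.pow_mem_of_mem P hg' 2 two_pos
  obtain ⟨k, hk⟩ := he_odd
  have h1P : (1 : 𝓞 L) ∈ P := by
    have : (1 : 𝓞 L) = ((e : ℤ) : 𝓞 L) - 2 * (k : 𝓞 L) := by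
      rw [hk]; push_cast; ring
    rw [this]
    exact Ideal.sub_mem _ heP (Ideal.mul_mem_right _ _ h2L)
  exact hP.ne_top ((Ideal.eq_top_iff_one P).mpr h1P)
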